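/- Let 2 ≤ k ≤ n and 0 ≤ r ≤ n, and let C be a division of {1,...,n} with |C| = (0^{k-2}, r, n-r, 0^{n-k}), i.e., C_{k-1} = {1,...,r} and C_k = {r+1,...,n}. Then a permutation w = w_1...w_n of {1,...,n} is a C-permutation if and only if the sequence r + 1/2, w_1, w_2, ..., w_n has exactly k-1 descents. Consequently, the number of C-permutations equals the number of permutations v ∈ S_{n+1} with k-1 descents and v(1) = r+1. -/

import Mathlib

open scoped Pointwise
open MeasureTheory Nat

namespace MixedEulerian

/-- A division of a finite set `S` into an ordered sequence of blocks,
with all elements of earlier blocks strictly smaller than those of later blocks. -/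
def IsDivision (C : List (Finset ℕ)) (S : Finset ℕ) : Prop :=
  (∀ s ∈ S, ∃ i, i < C.length ∧ s ∈ C.getD i ∅) ∧
  (∀ i, i < C.length → C.getD i ∅ ⊆ S) ∧
  (∀ i j, i < j → j < C.length →
    ∀ s ∈ C.getD i ∅, ∀ t ∈ C.getD j ∅, s < t)

/-- Type A admissibility: `s ∈ C_i` is admissible iff `s = min C₁`, `s = max C_n`,
or `i` is strictly between the first and the last index. (Indices are 0-based.) -/
def AdmissibleA (C : List (Finset ℕ)) (s : ℕ) : Prop :=
  ∃ i, i < C.length ∧ s ∈ C.getD i ∅ ∧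
    ((i = 0 ∧ ∀ t ∈ C.getD 0 ∅, s ≤ t) ∨
     (i = C.length - 1 ∧ ∀ t ∈ C.getD i ∅, t ≤ s) ∨
     (0 < i ∧ i + 1 < C.length))

/-- Type A deletion of `s` from the division `C`. -/
def deleteA (C : List (Finset ℕ)) (s : ℕ) : List (Finset ℕ) :=
  let i := C.findIdx (fun b => decide (s ∈ b))
  let B := C.getD i ∅
  let lo := B.filter (fun t => t < s)
  let hi := B.filter (fun t => s < t)
  if C.length ≤ 1 then []
  else if i = 0 then (hi ∪ C.getD 1 ∅) :: C.drop 2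
  else if i = C.length - 1 then C.take (i - 1) ++ [C.getD (i - 1) ∅ ∪ lo]
  else C.take (i - 1) ++ [C.getD (i - 1) ∅ ∪ lo, hi ∪ C.getD (i + 1) ∅] ++ C.drop (i + 2)

/-- `w` is a (type A) `C`-permutation: each entry is admissible in the division
obtained by deleting the previous entries, and all elements get deleted. -/
def IsCPermA : List (Finset ℕ) → List ℕ → Prop
  | C, [] => ∀ B ∈ C, B = ∅
  | C, s :: w => AdmissibleA C s ∧ IsCPermA (deleteA C s) w

/-- Type B admissibility: `s ∈ C_i` is admissible iff `s = min C₁` or `i ≠ 0`. -/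
def AdmissibleB (C : List (Finset ℕ)) (s : ℕ) : Prop :=
  ∃ i, i < C.length ∧ s ∈ C.getD i ∅ ∧
    ((i = 0 ∧ ∀ t ∈ C.getD 0 ∅, s ≤ t) ∨ i ≠ 0)

/-- Type B deletion of `s` from the division `C`. -/
def deleteB (C : List (Finset ℕ)) (s : ℕ) : List (Finset ℕ) :=
  let i := C.findIdx (fun b => decide (s ∈ b))
  if i = C.length - 1 ∧ 0 < i then
    C.take (i - 1) ++ [C.getD (i - 1) ∅ ∪ ((C.getD i ∅).erase s)]
  else deleteA C s

/-- `w` is a type B `C`-permutation. -/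
def IsCPermB : List (Finset ℕ) → List ℕ → Prop
  | C, [] => ∀ B ∈ C, B = ∅
  | C, s :: w => AdmissibleB C s ∧ IsCPermB (deleteB C s) w

/-- A sequence of elements that can be successively (type A) deleted from `C`. -/
def AdmissibleSeqA : List (Finset ℕ) → List ℕ → Prop
  | _, [] => True
  | C, s :: w => AdmissibleA C s ∧ AdmissibleSeqA (deleteA C s) w

/-- Number of descents of a list: the number of adjacent pairs that decrease. -/
def listDescents {α : Type*} [LinearOrder α] (l : List α) : ℕ :=
  (l.zip l.tail).countP (fun p => decide (p.2 < p.1))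

/-- Eulerian number `A(n,k)`: permutations of `{1,…,n}` with exactly `k-1` descents. -/
def eulerianA (n k : ℕ) : ℕ :=
  (List.range' 1 n).permutations.countP (fun l => decide (listDescents l = k - 1))

/-- `A(m,t;r)`: permutations of `{1,…,m+1}` with `t-1` descents and first entry `r+1`
(declared to be `0` when `t = 0`; it vanishes automatically when `t > m+1`). -/
def eulerianFirst (m t r : ℕ) : ℕ :=
  if t = 0 then 0 else
    (List.range' 1 (m + 1)).permutations.countP
      (fun l => decide (listDescents l = t - 1 ∧ l.headI = r + 1))

/-- The index of `t` in the `C`-permutation `w`: the (1-based) position of the block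
containing `t` just before `t` is deleted. -/
def indexFn (C : List (Finset ℕ)) : List ℕ → ℕ → ℕ
  | [], _ => 0
  | s :: w, t =>
      if t = s then C.findIdx (fun b => decide (t ∈ b)) + 1
      else indexFn (deleteA C s) w t

/-- An index function of `C`: any function sending each element of `C_i` into `{1,…,i}`
(1-based). -/
def IsIndexFn (C : List (Finset ℕ)) (I : ℕ → ℕ) : Prop :=
  ∀ i, i < C.length → ∀ s ∈ C.getD i ∅, 1 ≤ I s ∧ I s ≤ i + 1

/-- `C` is superdiagonal: `|C₁| + ⋯ + |C_i| ≥ i` for all `i`. -/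
def Superdiagonal (C : List (Finset ℕ)) : Prop :=
  ∀ i, i ≤ C.length → i ≤ ∑ j ∈ Finset.range i, (C.getD j ∅).card

/-- `C` is subdiagonal: `|C_n| + ⋯ + |C_{n-i+1}| ≥ i` for all `i`. -/
def Subdiagonal (C : List (Finset ℕ)) : Prop :=
  ∀ i, i ≤ C.length → i ≤ ∑ j ∈ Finset.range i, (C.getD (C.length - 1 - j) ∅).card

/-- The canonical division of `{1,…,c.sum}` with block sizes given by `c`. -/
def divisionOf (c : List ℕ) : List (Finset ℕ) :=
  (List.range c.length).map (fun i => Finset.Ioc ((c.take i).sum) ((c.take (i + 1)).sum))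

/-- The number of `C`-permutations for a division with block sizes `c`. -/
noncomputable def NPerm (c : List ℕ) : ℕ :=
  Nat.card {w : List ℕ // IsCPermA (divisionOf c) w}

/-- The division of `{1,…,n}` with all elements in (1-based) position `k`. -/
def midDivision (n k : ℕ) : List (Finset ℕ) :=
  List.replicate (k - 1) ∅ ++ [Finset.Icc 1 n] ++ List.replicate (n - k) ∅

/-- The hypersimplex `Δ_{k,n} ⊆ ℝ^{n+1}`. -/
def hypersimplex (n k : ℕ) : Set (Fin (n + 1) → ℝ) :=
  convexHull ℝ {x | ∃ T : Finset (Fin (n + 1)), T.card = k ∧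
    x = fun i => if i ∈ T then (1 : ℝ) else 0}

/-- The permutohedron `P(y₁,…,y_m) ⊆ ℝ^m`. -/
def permutohedron {m : ℕ} (y : Fin m → ℝ) : Set (Fin m → ℝ) :=
  convexHull ℝ {x | ∃ w : Equiv.Perm (Fin m), x = y ∘ w}

/-- The polytope `Γ_{k,n} ⊆ ℝ^n`, the convex hull of all `±e_{i₁} ± ⋯ ± e_{i_k}`. -/
def gammaPolytope (n k : ℕ) : Set (Fin n → ℝ) :=
  convexHull ℝ {x | ∃ T : Finset (Fin n), T.card = k ∧ ∃ ε : Fin n → ℝ,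
    (∀ i, ε i = 1 ∨ ε i = -1) ∧ x = fun i => if i ∈ T then ε i else 0}

/-- The signed permutohedron `SP(y₁,…,y_n) ⊆ ℝ^n`. -/
def signedPermutohedron {m : ℕ} (y : Fin m → ℝ) : Set (Fin m → ℝ) :=
  convexHull ℝ {x | ∃ w : Equiv.Perm (Fin m), ∃ ε : Fin m → ℝ,
    (∀ i, ε i = 1 ∨ ε i = -1) ∧ x = fun i => ε i * y (w i)}


/-! ### Auxiliary development -/

/-- The two-adjacent-block division shape. -/
def Dv (q e : ℕ) (A B : Finset ℕ) : List (Finset ℕ) :=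
  List.replicate q ∅ ++ A :: B :: List.replicate e ∅

lemma Dv_length (q e : ℕ) (A B : Finset ℕ) : (Dv q e A B).length = q + 2 + e := by
  simp [Dv]; ring

lemma getD_of_all_empty (l : List (Finset ℕ)) (h : ∀ x ∈ l, x = (∅ : Finset ℕ)) (i : ℕ) :
    l.getD i ∅ = ∅ := by
  induction l generalizing i with
  | nil => simp
  | cons a l ih =>
    cases i with
    | zero => simpa using h a (by simp)
    | succ j => simpa using ih (fun x hx => h x (by simp [hx])) j

lemma Dv_getD (q e : ℕ) (A B : Finset ℕ) (i : ℕ) :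
    (Dv q e A B).getD i ∅ = if i = q then A else if i = q + 1 then B else ∅ := by
  induction q generalizing i with
  | zero =>
    match i with
    | 0 => simp [Dv]
    | 1 => simp [Dv]
    | (j+2) =>
      have : (Dv 0 e A B).getD (j+2) ∅ = (List.replicate e (∅:Finset ℕ)).getD j ∅ := by
        simp [Dv]
      rw [this, getD_of_all_empty]
      · simp
      · intro x hx; exact List.eq_of_mem_replicate hx
  | succ n ih =>
    have hD : Dv (n+1) e A B = ∅ :: Dv n e A B := by simp [Dv, List.replicate_succ]
    match i with
    | 0 => rw [hD]; simp
    | (j+1) =>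
      rw [hD, List.getD_cons_succ, ih j]
      by_cases h1 : j = n <;> by_cases h2 : j = n + 1 <;> simp [h1, h2] <;> omega

lemma Dv_findIdx_A {s : ℕ} {A B : Finset ℕ} (q e : ℕ) (hs : s ∈ A) :
    (Dv q e A B).findIdx (fun b => decide (s ∈ b)) = q := by
  induction q with
  | zero => simp [Dv, List.findIdx_cons, hs]
  | succ n ih =>
    have hD : Dv (n+1) e A B = ∅ :: Dv n e A B := by simp [Dv, List.replicate_succ]
    rw [hD, List.findIdx_cons]
    simp [ih]

lemma Dv_findIdx_B {s : ℕ} {A B : Finset ℕ} (q e : ℕ) (hs : s ∈ B) (hsA : s ∉ A) :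
    (Dv q e A B).findIdx (fun b => decide (s ∈ b)) = q + 1 := by
  induction q with
  | zero => simp [Dv, List.findIdx_cons, hs, hsA]
  | succ n ih =>
    have hD : Dv (n+1) e A B = ∅ :: Dv n e A B := by simp [Dv, List.replicate_succ]
    rw [hD, List.findIdx_cons]
    simp [ih]

lemma Dv_take (q e : ℕ) (A B : Finset ℕ) (m : ℕ) (h : m ≤ q) :
    (Dv q e A B).take m = List.replicate m ∅ := by
  rw [Dv, List.take_append_of_le_length (by simpa using h), List.take_replicate,
    min_eq_left h]

lemma Dv_drop (q e : ℕ) (A B : Finset ℕ) (m : ℕ) :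
    (Dv q e A B).drop (q + m) = (A :: B :: List.replicate e ∅).drop m := by
  rw [Dv]
  have : q + m = (List.replicate q (∅:Finset ℕ)).length + m := by simp
  rw [this, List.drop_append]
  simp


lemma del_a {s : ℕ} {A B : Finset ℕ} {e : ℕ} (hs : s ∈ A) :
    deleteA (Dv 0 e A B) s = (A.filter (fun t => s < t) ∪ B) :: List.replicate e ∅ := by
  have hidx : (Dv 0 e A B).findIdx (fun b => decide (s ∈ b)) = 0 := Dv_findIdx_A 0 e hs
  have hdrop : (Dv 0 e A B).drop 2 = List.replicate e ∅ := by
    simpa using Dv_drop 0 e A B 2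
  rw [deleteA]
  simp only [hidx, Dv_length, Dv_getD, hdrop]
  split_ifs
  all_goals try (exfalso; first | omega | assumption)
  all_goals rfl

lemma del_b {s : ℕ} {A B : Finset ℕ} {q e : ℕ} (hq : 0 < q) (hs : s ∈ A) :
    deleteA (Dv q e A B) s
      = Dv (q-1) e (A.filter (fun t => t < s)) ((A.filter (fun t => s < t)) ∪ B) := by
  have hidx : (Dv q e A B).findIdx (fun b => decide (s ∈ b)) = q := Dv_findIdx_A q e hs
  have hdrop : (Dv q e A B).drop (q + 2) = List.replicate e ∅ := by
    simpa using Dv_drop q e A B 2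
  have htake := Dv_take q e A B (q-1) (by omega)
  rw [deleteA]
  simp only [hidx, Dv_length, Dv_getD, hdrop, htake]
  split_ifs
  all_goals try (exfalso; first | omega | assumption)
  all_goals simp [Dv, Finset.empty_union, Finset.union_empty]

lemma del_c {s : ℕ} {A B : Finset ℕ} {q : ℕ} (hs : s ∈ B) (hsA : s ∉ A) :
    deleteA (Dv q 0 A B) s
      = List.replicate q ∅ ++ [A ∪ B.filter (fun t => t < s)] := by
  have hidx : (Dv q 0 A B).findIdx (fun b => decide (s ∈ b)) = q + 1 :=
    Dv_findIdx_B q _ hs hsA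
  have htake : (Dv q 0 A B).take q = List.replicate q ∅ := Dv_take q 0 A B q le_rfl
  have hq1 : q + 1 - 1 = q := by omega
  rw [deleteA]
  simp only [hidx, Dv_length, Dv_getD, hq1, htake]
  split_ifs
  all_goals try (exfalso; first | omega | assumption)
  all_goals rfl

lemma del_d {s : ℕ} {A B : Finset ℕ} {q e : ℕ} (he : 0 < e) (hs : s ∈ B) (hsA : s ∉ A) :
    deleteA (Dv q e A B) s
      = Dv q (e-1) (A ∪ B.filter (fun t => t < s)) (B.filter (fun t => s < t)) := by
  have hidx : (Dv q e A B).findIdx (fun b => decide (s ∈ b)) = q + 1 :=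
    Dv_findIdx_B q _ hs hsA
  have hq1 : q + 1 - 1 = q := by omega
  have htake : (Dv q e A B).take q = List.replicate q ∅ := Dv_take q e A B q le_rfl
  have hdrop : (Dv q e A B).drop (q + 1 + 2) = List.replicate (e-1) ∅ := by
    have h2 : q + 1 + 2 = q + 3 := by omega
    rw [h2, Dv_drop q e A B 3]
    obtain ⟨e', rfl⟩ : ∃ e', e = e' + 1 := ⟨e - 1, by omega⟩
    simp [List.replicate_succ]
  rw [deleteA]
  simp only [hidx, Dv_length, Dv_getD, hq1, htake, hdrop]
  split_ifs
  all_goals try (exfalso; first | omega | assumption)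
  all_goals simp [Dv, Finset.union_empty, Finset.empty_union]

lemma adm_mem {s : ℕ} {A B : Finset ℕ} {q e : ℕ}
    (h : AdmissibleA (Dv q e A B) s) : s ∈ A ∪ B := by
  obtain ⟨i, _, hmem, -⟩ := h
  rw [Dv_getD] at hmem
  split_ifs at hmem with h1 h2
  · exact Finset.mem_union_left _ hmem
  · exact Finset.mem_union_right _ hmem
  · simp at hmem

lemma adm_A_iff {s : ℕ} {A B : Finset ℕ} (q e : ℕ) (hs : s ∈ A)
    (hord : ∀ x ∈ A, ∀ y ∈ B, x < y) :
    AdmissibleA (Dv q e A B) s ↔ (0 < q ∨ ∀ t ∈ A, s ≤ t) := by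
  constructor
  · rintro ⟨i, hi, hmem, hd⟩
    rw [Dv_getD] at hmem
    by_cases hq : 0 < q
    · exact Or.inl hq
    · right
      have hq0 : q = 0 := by omega
      subst hq0
      have hi0 : i = 0 := by
        split_ifs at hmem with h1 h2
        · omega
        · exact absurd (hord s hs s hmem) (lt_irrefl s)
        · simp at hmem
      subst hi0
      rcases hd with ⟨-, hmin⟩ | ⟨habs, -⟩ | ⟨habs, -⟩
      · intro t ht
        have := hmin t
        rw [Dv_getD] at this
        simp only [if_pos rfl] at this
        exact this ht
      · rw [Dv_length] at habs; omega
      · omega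
  · intro h
    rcases h with hq | hmin
    · exact ⟨q, by rw [Dv_length]; omega, by rw [Dv_getD]; simp [hs],
        Or.inr (Or.inr ⟨hq, by rw [Dv_length]; omega⟩)⟩
    · by_cases hq : 0 < q
      · exact ⟨q, by rw [Dv_length]; omega, by rw [Dv_getD]; simp [hs],
          Or.inr (Or.inr ⟨hq, by rw [Dv_length]; omega⟩)⟩
      · have hq0 : q = 0 := by omega
        subst hq0
        refine ⟨0, by rw [Dv_length]; omega, by rw [Dv_getD]; simp [hs], Or.inl ⟨rfl, ?_⟩⟩
        intro t ht
        rw [Dv_getD] at ht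
        simp only [if_pos rfl] at ht
        exact hmin t ht

lemma adm_B_iff {s : ℕ} {A B : Finset ℕ} (q e : ℕ) (hs : s ∈ B) (hsA : s ∉ A) :
    AdmissibleA (Dv q e A B) s ↔ (0 < e ∨ ∀ t ∈ B, t ≤ s) := by
  constructor
  · rintro ⟨i, hi, hmem, hd⟩
    rw [Dv_getD] at hmem
    by_cases he : 0 < e
    · exact Or.inl he
    · right
      have he0 : e = 0 := by omega
      subst he0
      have hi0 : i = q + 1 := by
        split_ifs at hmem with h1 h2
        · exact absurd hmem hsA
        · omega
        · simp at hmem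
      subst hi0
      rcases hd with ⟨habs, -⟩ | ⟨-, hmax⟩ | ⟨-, habs⟩
      · omega
      · intro t ht
        have := hmax t
        rw [Dv_getD] at this
        rw [if_neg (by omega), if_pos rfl] at this
        exact this ht
      · rw [Dv_length] at habs; omega
  · intro h
    have hmem : s ∈ (Dv q e A B).getD (q+1) ∅ := by
      rw [Dv_getD, if_neg (by omega), if_pos rfl]; exact hs
    rcases h with he | hmax
    · exact ⟨q + 1, by rw [Dv_length]; omega, hmem,
        Or.inr (Or.inr ⟨by omega, by rw [Dv_length]; omega⟩)⟩
    · by_cases he : 0 < e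
      · exact ⟨q + 1, by rw [Dv_length]; omega, hmem,
          Or.inr (Or.inr ⟨by omega, by rw [Dv_length]; omega⟩)⟩
      · have he0 : e = 0 := by omega
        subst he0
        refine ⟨q + 1, by rw [Dv_length]; omega, hmem,
          Or.inr (Or.inl ⟨by rw [Dv_length]; omega, ?_⟩)⟩
        intro t ht
        rw [Dv_getD, if_neg (by omega), if_pos rfl] at ht
        exact hmax t ht


section Descents

variable {α : Type*} [LinearOrder α] {β : Type*} [LinearOrder β]

lemma listDescents_nil : listDescents ([] : List α) = 0 := rfl

lemma listDescents_single (a : α) : listDescents [a] = 0 := rfl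

lemma listDescents_cons_cons (a b : α) (l : List α) :
    listDescents (a :: b :: l) = (if b < a then 1 else 0) + listDescents (b :: l) := by
  simp only [listDescents, List.tail_cons, List.zip_cons_cons, List.countP_cons]
  by_cases h : b < a <;> simp [h] <;> omega

lemma listDescents_le_tail_length (l : List α) :
    listDescents l ≤ l.tail.length := by
  calc listDescents l ≤ (l.zip l.tail).length := List.countP_le_length
  _ = min l.length l.tail.length := List.length_zip
  _ ≤ l.tail.length := min_le_right _ _

lemma one_le_listDescents {a t : α} {l : List α} (h : t ∈ l) (ht : t < a) :
    1 ≤ listDescents (a :: l) := by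
  induction l generalizing a with
  | nil => simp at h
  | cons b l ih =>
    rw [listDescents_cons_cons]
    rcases List.mem_cons.1 h with rfl | h'
    · rw [if_pos ht]; omega
    · by_cases hba : b < a
      · rw [if_pos hba]; omega
      · rw [if_neg hba]
        have := ih h' (lt_of_lt_of_le ht (not_lt.1 hba))
        omega

lemma listDescents_lt_of_head_lt {a t : α} {l : List α} (h : t ∈ l) (ht : a < t) :
    listDescents (a :: l) ≤ l.length - 1 := by
  induction l generalizing a with
  | nil => simp at h
  | cons b l ih =>
    rw [listDescents_cons_cons]
    rcases List.mem_cons.1 h with rfl | h'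
    · rw [if_neg (not_lt.2 ht.le)]
      have := listDescents_le_tail_length (t :: l)
      simpa using this
    · have hlen : 1 ≤ l.length := List.length_pos_iff.2 (List.ne_nil_of_mem h')
      by_cases hba : b < a
      · rw [if_pos hba]
        have := ih (a := b) h' (hba.trans ht)
        simp only [List.length_cons]
        omega
      · rw [if_neg hba]
        have := listDescents_le_tail_length (b :: l)
        simp only [List.tail_cons] at this
        simp only [List.length_cons]
        omega

lemma listDescents_map {f : α → β} (hf : ∀ x y, f x < f y ↔ x < y) (l : List α) :
    listDescents (l.map f) = listDescents l := by
  induction l with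
  | nil => rfl
  | cons a l ih =>
    cases l with
    | nil => rfl
    | cons b l' =>
      simp only [List.map_cons] at ih ⊢
      rw [listDescents_cons_cons, listDescents_cons_cons, ih]
      by_cases h : b < a
      · rw [if_pos h, if_pos ((hf _ _).2 h)]
      · rw [if_neg h, if_neg (fun hc => h ((hf _ _).1 hc))]

end Descents

lemma nodup_content_length {w : List ℕ} {S : Finset ℕ} (hnd : w.Nodup)
    (hc : ∀ x, x ∈ w ↔ x ∈ S) : w.length = S.card := by
  have h1 : w.toFinset = S := Finset.ext (fun x => by simp [hc x])
  rw [← h1, List.toFinset_card_of_nodup hnd]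

lemma eq_single_of_nodup {w : List ℕ} {t : ℕ} (hnd : w.Nodup)
    (hc : ∀ x, x ∈ w ↔ x = t) : w = [t] := by
  cases w with
  | nil => simpa using (hc t).2 rfl
  | cons a w' =>
    have ha : a = t := (hc a).1 (by simp)
    subst ha
    cases w' with
    | nil => rfl
    | cons b w'' =>
      have hb : b = a := (hc b).1 (by simp)
      subst hb
      simp at hnd

lemma isCPermA_singleton (x : ℕ) (w : List ℕ) :
    IsCPermA [({x} : Finset ℕ)] w ↔ w = [x] := by
  constructor
  · intro h
    cases w with
    | nil => simpa using h ({x} : Finset ℕ) (by simp)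
    | cons s w' =>
      obtain ⟨hadm, hrest⟩ := h
      obtain ⟨i, hi, hmem, -⟩ := hadm
      have hi0 : i = 0 := by simpa using hi
      subst hi0
      have hsx : s = x := by simpa using hmem
      subst hsx
      have hdel : deleteA [({s} : Finset ℕ)] s = [] := by rw [deleteA]; simp
      rw [hdel] at hrest
      cases w' with
      | nil => rfl
      | cons t w'' =>
        obtain ⟨⟨i, hi, -⟩, -⟩ := hrest
        simp at hi
  · rintro rfl
    refine ⟨⟨0, by simp, by simp, Or.inl ⟨rfl, by simp⟩⟩, ?_⟩
    have hdel : deleteA [({x} : Finset ℕ)] x = [] := by rw [deleteA]; simp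
    rw [hdel]
    intro B hB
    simp at hB


lemma filter_lt_union_filter_gt {A : Finset ℕ} {s : ℕ} (hs : s ∈ A) :
    A.filter (fun t => t < s) ∪ A.filter (fun t => s < t) = A.erase s := by
  ext x
  simp only [Finset.mem_union, Finset.mem_filter, Finset.mem_erase]
  constructor
  · rintro (⟨hxA, h⟩ | ⟨hxA, h⟩) <;> exact ⟨by omega, hxA⟩
  · rintro ⟨hne, hxA⟩
    rcases lt_or_gt_of_ne hne with h | h
    · exact Or.inl ⟨hxA, h⟩
    · exact Or.inr ⟨hxA, h⟩

lemma disjoint_filter_lt_gt (A : Finset ℕ) (s : ℕ) :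
    Disjoint (A.filter (fun t => t < s)) (A.filter (fun t => s < t)) := by
  rw [Finset.disjoint_left]
  intro x hx hx'
  simp only [Finset.mem_filter] at hx hx'
  omega

lemma card_split {A : Finset ℕ} {s : ℕ} (hs : s ∈ A) :
    (A.filter (fun t => t < s)).card + (A.filter (fun t => s < t)).card = A.card - 1 := by
  rw [← Finset.card_union_of_disjoint (disjoint_filter_lt_gt A s),
    filter_lt_union_filter_gt hs, Finset.card_erase_of_mem hs]

lemma rat_lt_sub_half_iff {u s : ℕ} (h : u ≠ s) : ((u:ℚ) < (s:ℚ) - 1/2) ↔ u < s := by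
  by_cases h1 : u < s
  · simp only [h1, iff_true]
    have : (u:ℚ) + 1 ≤ s := by exact_mod_cast h1
    linarith
  · simp only [h1, iff_false, not_lt]
    have h2 : s + 1 ≤ u := by omega
    have : (s:ℚ) + 1 ≤ u := by exact_mod_cast h2
    linarith

lemma rep_append_eq_Dv (q : ℕ) (hq : 0 < q) (X : Finset ℕ) :
    List.replicate q (∅:Finset ℕ) ++ [X] = Dv (q-1) 0 ∅ X := by
  obtain ⟨q', rfl⟩ : ∃ q', q = q' + 1 := ⟨q - 1, by omega⟩
  rw [Dv, List.replicate_succ']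
  simp

lemma coe_norm (w : List ℕ) :
    List.map (fun z : ℚ => z) (w >>= fun a => pure ((a:ℚ)))
      = List.map (fun z : ℕ => (z:ℚ)) w := by
  induction w with
  | nil => rfl
  | cons a w ih =>
    simp only [List.bind_eq_flatMap] at ih ⊢
    simp only [List.flatMap_cons]
    simp_all

lemma reduce_rhs {s : ℕ} {w : List ℕ} {A B A' B' : Finset ℕ} {μ μ' : ℚ} {q q' : ℕ}
    (hs : s ∈ A ∪ B)
    (hU : A' ∪ B' = (A ∪ B).erase s)
    (hne : (A' ∪ B').Nonempty)
    (hdes : ∀ u : ℕ, ∀ t : List ℕ, u ∈ A' ∪ B' → (∀ x ∈ t, x ∈ A' ∪ B') →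
      (listDescents (μ :: List.map (fun z : ℕ => (z:ℚ)) (s :: u :: t)) = q + 1 ↔
       listDescents (μ' :: List.map (fun z : ℕ => (z:ℚ)) (u :: t)) = q' + 1)) :
    ((s :: w).Nodup ∧ (∀ x, x ∈ s :: w ↔ x ∈ A ∪ B) ∧
        listDescents (μ :: List.map (fun z : ℕ => (z:ℚ)) (s :: w)) = q + 1)
      ↔ (w.Nodup ∧ (∀ x, x ∈ w ↔ x ∈ A' ∪ B') ∧
        listDescents (μ' :: List.map (fun z : ℕ => (z:ℚ)) w) = q' + 1) := by
  constructor
  · rintro ⟨hnd, hc, hd⟩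
    have hsw : s ∉ w := (List.nodup_cons.1 hnd).1
    have hnd' : w.Nodup := (List.nodup_cons.1 hnd).2
    have hc' : ∀ x, x ∈ w ↔ x ∈ A' ∪ B' := by
      intro x
      rw [hU, Finset.mem_erase]
      constructor
      · intro hx; exact ⟨fun hxs => hsw (hxs ▸ hx), (hc x).1 (List.mem_cons_of_mem _ hx)⟩
      · rintro ⟨hxs, hxAB⟩
        rcases List.mem_cons.1 ((hc x).2 hxAB) with rfl | h
        · exact absurd rfl hxs
        · exact h
    obtain ⟨u0, hu0⟩ := hne
    have hu0w : u0 ∈ w := (hc' u0).2 hu0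
    obtain ⟨u, t, rfl⟩ : ∃ u t, w = u :: t := by
      cases w with
      | nil => simp at hu0w
      | cons u t => exact ⟨u, t, rfl⟩
    exact ⟨hnd', hc',
      (hdes u t ((hc' u).1 (by simp)) (fun x hx => (hc' x).1 (by simp [hx]))).1 hd⟩
  · rintro ⟨hnd', hc', hd'⟩
    have hsAB' : s ∉ A' ∪ B' := by rw [hU]; simp
    have hsw : s ∉ w := fun h => hsAB' ((hc' s).1 h)
    have hc : ∀ x, x ∈ s :: w ↔ x ∈ A ∪ B := by
      intro x
      rw [List.mem_cons]
      constructor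
      · rintro (rfl | h)
        · exact hs
        · exact Finset.mem_of_mem_erase (hU ▸ (hc' x).1 h)
      · intro hx
        by_cases hxs : x = s
        · exact Or.inl hxs
        · exact Or.inr ((hc' x).2 (hU ▸ Finset.mem_erase.2 ⟨hxs, hx⟩))
    obtain ⟨u0, hu0⟩ := hne
    obtain ⟨u, t, rfl⟩ : ∃ u t, w = u :: t := by
      cases w with
      | nil => exact absurd ((hc' u0).2 hu0) (by simp)
      | cons u t => exact ⟨u, t, rfl⟩
    exact ⟨List.nodup_cons.2 ⟨hsw, hnd'⟩, hc,
      (hdes u t ((hc' u).1 (by simp)) (fun x hx => (hc' x).1 (by simp [hx]))).2 hd'⟩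


lemma mainD (w : List ℕ) : ∀ (q e : ℕ) (A B : Finset ℕ) (μ : ℚ),
    q + 2 + e = A.card + B.card →
    (∀ x ∈ A, ∀ y ∈ B, x < y) →
    (∀ x ∈ A, (x : ℚ) < μ) →
    (∀ y ∈ B, μ < (y : ℚ)) →
    (IsCPermA (Dv q e A B) w ↔
      (w.Nodup ∧ (∀ x, x ∈ w ↔ x ∈ A ∪ B) ∧
        listDescents (μ :: List.map (fun z : ℕ => (z:ℚ)) w) = q + 1)) := by
  induction w with
  | nil =>
    intro q e A B μ hm hord hμA hμB
    constructor
    · intro h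
      exfalso
      have hA : A = ∅ := h A (by rw [Dv]; simp)
      have hB : B = ∅ := h B (by rw [Dv]; simp)
      rw [hA, hB] at hm
      simp only [Finset.card_empty] at hm
      omega
    · rintro ⟨-, -, hd⟩
      exfalso
      simp only [List.map_nil] at hd
      rw [listDescents_single] at hd
      omega
  | cons s w ih =>
    intro q e A B μ hm hord hμA hμB
    have hdisjAB : Disjoint A B := by
      rw [Finset.disjoint_left]
      intro x hA hB
      exact lt_irrefl x (hord x hA x hB)
    have hcardU : (A ∪ B).card = A.card + B.card := Finset.card_union_of_disjoint hdisjAB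
    show (AdmissibleA (Dv q e A B) s ∧ IsCPermA (deleteA (Dv q e A B) s) w) ↔ _
    by_cases hsAB : s ∈ A ∪ B
    swap
    · constructor
      · rintro ⟨hadm, -⟩
        exact absurd (adm_mem hadm) hsAB
      · rintro ⟨-, hc, -⟩
        exact absurd ((hc s).1 (by simp)) hsAB
    rcases Finset.mem_union.1 hsAB with hsA | hsB
    -- ================== CASE s ∈ A ==================
    · have hsB : s ∉ B := Finset.disjoint_left.1 hdisjAB hsA
      have hsplit : (A.filter (fun t => t < s)).card + (A.filter (fun t => s < t)).card
          = A.card - 1 := card_split hsA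
      have hcardA : 1 ≤ A.card := Finset.card_pos.2 ⟨s, hsA⟩
      have hdisj_hiB : Disjoint (A.filter (fun t => s < t)) B :=
        Finset.disjoint_left.2 fun x hx hxB =>
          Finset.disjoint_left.1 hdisjAB (Finset.mem_filter.1 hx).1 hxB
      have hU : A.filter (fun t => t < s) ∪ (A.filter (fun t => s < t) ∪ B)
          = (A ∪ B).erase s := by
        ext x
        simp only [Finset.mem_union, Finset.mem_erase, Finset.mem_filter]
        constructor
        · rintro (⟨hxA, h⟩ | ⟨hxA, h⟩ | hxB)
          · exact ⟨by omega, Or.inl hxA⟩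
          · exact ⟨by omega, Or.inl hxA⟩
          · exact ⟨fun hxs => hsB (hxs ▸ hxB), Or.inr hxB⟩
        · rintro ⟨hne, hxA | hxB⟩
          · rcases lt_or_gt_of_ne hne with h | h
            · exact Or.inl ⟨hxA, h⟩
            · exact Or.inr (Or.inl ⟨hxA, h⟩)
          · exact Or.inr (Or.inr hxB)
      by_cases hq : 0 < q
      -- ---- case 2d : q ≥ 1, every s ∈ A admissible ----
      · have hAdm : AdmissibleA (Dv q e A B) s := (adm_A_iff q e hsA hord).2 (Or.inl hq)
        rw [del_b hq hsA]
        have hm' : (q-1) + 2 + e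
            = (A.filter (fun t => t < s)).card + (A.filter (fun t => s < t) ∪ B).card := by
          rw [Finset.card_union_of_disjoint hdisj_hiB]
          omega
        have hord' : ∀ x ∈ A.filter (fun t => t < s),
            ∀ y ∈ A.filter (fun t => s < t) ∪ B, x < y := by
          intro x hx y hy
          have hx' := Finset.mem_filter.1 hx
          rcases Finset.mem_union.1 hy with hy | hy
          · exact lt_trans hx'.2 (Finset.mem_filter.1 hy).2
          · exact hord x hx'.1 y hy
        have hμA' : ∀ x ∈ A.filter (fun t => t < s), (x:ℚ) < (s:ℚ) - 1/2 := by
          intro x hx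
          have hx' := (Finset.mem_filter.1 hx).2
          exact (rat_lt_sub_half_iff hx'.ne).2 hx'
        have hμB' : ∀ y ∈ A.filter (fun t => s < t) ∪ B, (s:ℚ) - 1/2 < (y:ℚ) := by
          intro y hy
          have hsy : s < y := by
            rcases Finset.mem_union.1 hy with hy | hy
            · exact (Finset.mem_filter.1 hy).2
            · exact hord s hsA y hy
          have : (s:ℚ) < (y:ℚ) := by exact_mod_cast hsy
          linarith
        rw [ih (q-1) e _ _ ((s:ℚ) - 1/2) hm' hord' hμA' hμB']
        rw [and_iff_right hAdm]
        refine (reduce_rhs hsAB hU ?_ ?_).symm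
        · rw [← Finset.card_pos, hU, Finset.card_erase_of_mem hsAB, hcardU]
          omega
        · intro u t hu ht
          have hus : u ≠ s := by
            rw [hU] at hu
            exact (Finset.mem_erase.1 hu).1
          simp only [List.map_cons]
          rw [listDescents_cons_cons μ, listDescents_cons_cons ((s:ℚ)),
            listDescents_cons_cons ((s:ℚ) - 1/2)]
          rw [if_pos (hμA s hsA)]
          have h2 : ((u:ℚ) < (s:ℚ) - 1/2) ↔ ((u:ℚ) < (s:ℚ)) := by
            rw [rat_lt_sub_half_iff hus, Nat.cast_lt]
          by_cases h3 : (u:ℚ) < (s:ℚ)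
          · rw [if_pos h3, if_pos (h2.2 h3)]
            omega
          · rw [if_neg h3, if_neg (fun hc => h3 (h2.1 hc))]
            omega
      -- ---- q = 0 ----
      · have hq0 : q = 0 := by omega
        subst hq0
        by_cases hmin : ∀ t ∈ A, s ≤ t
        · -- admissible; delete merges into first block
          have hAdm : AdmissibleA (Dv 0 e A B) s := (adm_A_iff 0 e hsA hord).2 (Or.inr hmin)
          rw [del_a hsA]
          have hloe : A.filter (fun t => t < s) = ∅ :=
            Finset.filter_false_of_mem (fun t ht => not_lt.2 (hmin t ht))
          have hloc : (A.filter (fun t => t < s)).card = 0 := by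
            rw [hloe]; rfl
          have hU0 : A.filter (fun t => s < t) ∪ B = (A ∪ B).erase s := by
            rw [← hU, hloe, Finset.empty_union]
          have hgt : ∀ u ∈ (A ∪ B).erase s, s < u := by
            intro u hu
            have h1 := (Finset.mem_erase.1 hu).1
            rcases Finset.mem_union.1 (Finset.mem_of_mem_erase hu) with h | h
            · exact lt_of_le_of_ne (hmin u h) (Ne.symm h1)
            · exact hord s hsA u h
          by_cases he : 0 < e
          · -- case 2a
            have hDv : (A.filter (fun t => s < t) ∪ B) :: List.replicate e (∅:Finset ℕ)
                = Dv 0 (e-1) (A.filter (fun t => s < t) ∪ B) ∅ := by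
              rw [Dv]
              obtain ⟨e', rfl⟩ : ∃ e', e = e' + 1 := ⟨e-1, by omega⟩
              simp [List.replicate_succ]
            rw [hDv]
            have hm' : 0 + 2 + (e-1)
                = (A.filter (fun t => s < t) ∪ B).card + (∅:Finset ℕ).card := by
              rw [Finset.card_empty, Finset.card_union_of_disjoint hdisj_hiB]
              omega
            have hord' : ∀ x ∈ A.filter (fun t => s < t) ∪ B,
                ∀ y ∈ (∅:Finset ℕ), x < y := by simp
            have hμA' : ∀ x ∈ A.filter (fun t => s < t) ∪ B,
                (x:ℚ) < ((A ∪ B).sup id : ℕ) + 1 := by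
              intro x hx
              have hxU : x ∈ A ∪ B := by
                rw [hU0] at hx
                exact Finset.mem_of_mem_erase hx
              have h1 : x ≤ (A ∪ B).sup id := Finset.le_sup (f := id) hxU
              have h2 : (x:ℚ) ≤ (((A ∪ B).sup id : ℕ) : ℚ) := by exact_mod_cast h1
              linarith
            have hμB' : ∀ y ∈ (∅:Finset ℕ), (((A ∪ B).sup id : ℕ) : ℚ) + 1 < (y:ℚ) := by
              simp
            rw [ih 0 (e-1) _ _ _ hm' hord' hμA' hμB']
            rw [and_iff_right hAdm]
            refine (reduce_rhs hsAB (by rw [Finset.union_empty]; exact hU0) ?_ ?_).symm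
            · rw [Finset.union_empty, ← Finset.card_pos, hU0,
                Finset.card_erase_of_mem hsAB, hcardU]
              omega
            · intro u t hu ht
              rw [Finset.union_empty] at hu
              have hsu : s < u := hgt u (hU0 ▸ hu)
              have hsu' : (s:ℚ) < (u:ℚ) := by exact_mod_cast hsu
              simp only [List.map_cons]
              rw [listDescents_cons_cons μ, listDescents_cons_cons ((s:ℚ)),
                listDescents_cons_cons ((((A ∪ B).sup id : ℕ) : ℚ) + 1)]
              rw [if_pos (hμA s hsA), if_neg (not_lt.2 hsu'.le), if_pos (hμA' u hu)]
              omega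
          · -- case 2b : e = 0, two elements left
            have he0 : e = 0 := by omega
            subst he0
            have hcard1 : (A.filter (fun t => s < t) ∪ B).card = 1 := by
              rw [hU0, Finset.card_erase_of_mem hsAB, hcardU]
              omega
            obtain ⟨t, ht⟩ := Finset.card_eq_one.1 hcard1
            have htmem : t ∈ (A ∪ B).erase s := by rw [← hU0, ht]; simp
            have hts : t ≠ s := (Finset.mem_erase.1 htmem).1
            have hst : s < t := hgt t htmem
            have hst' : (s:ℚ) < (t:ℚ) := by exact_mod_cast hst
            simp only [List.replicate_zero]
            rw [ht, isCPermA_singleton]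
            rw [and_iff_right hAdm]
            constructor
            · rintro rfl
              refine ⟨by simp [Ne.symm hts], ?_, ?_⟩
              · intro x
                have hAB : A ∪ B = insert s {t} := by
                  rw [← Finset.insert_erase hsAB, ← hU0, ht]
                rw [hAB]
                simp
              · simp only [List.map_cons, List.map_nil]
                rw [listDescents_cons_cons, listDescents_cons_cons, listDescents_single]
                rw [if_pos (hμA s hsA), if_neg (not_lt.2 hst'.le)]
            · rintro ⟨hnd, hc, -⟩
              have hsw : s ∉ w := (List.nodup_cons.1 hnd).1
              apply eq_single_of_nodup (List.nodup_cons.1 hnd).2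
              intro x
              constructor
              · intro hx
                have hxU : x ∈ A ∪ B := (hc x).1 (by simp [hx])
                have hxs : x ≠ s := fun h => hsw (h ▸ hx)
                have hx2 : x ∈ (A ∪ B).erase s := Finset.mem_erase.2 ⟨hxs, hxU⟩
                rw [← hU0, ht] at hx2
                simpa using hx2
              · intro hxt
                have h1 : t ∈ s :: w := (hc t).2 (Finset.mem_of_mem_erase htmem)
                rcases List.mem_cons.1 h1 with h | h
                · exact absurd h hts
                · rw [hxt]; exact h
        · -- case 2c : q = 0, s not minimal: both sides false
          push_neg at hmin
          obtain ⟨t, htA, hts⟩ := hmin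
          constructor
          · rintro ⟨hadm, -⟩
            rcases (adm_A_iff 0 e hsA hord).1 hadm with h | h
            · omega
            · exact absurd (h t htA) (not_le.2 hts)
          · rintro ⟨hnd, hc, hd⟩
            exfalso
            have hts2 : t < s := hts
            have htw : t ∈ w := by
              have h1 := (hc t).2 (Finset.mem_union_left _ htA)
              rcases List.mem_cons.1 h1 with rfl | h
              · omega
              · exact h
            have hts' : (t:ℚ) < (s:ℚ) := by exact_mod_cast hts2
            have htm : (t:ℚ) ∈ List.map (fun z : ℕ => (z:ℚ)) w := List.mem_map.2 ⟨t, htw, rfl⟩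
            have h1 : 1 ≤ listDescents ((s:ℚ) :: List.map (fun z : ℕ => (z:ℚ)) w) :=
              one_le_listDescents htm hts'
            simp only [List.map_cons] at hd
            rw [listDescents_cons_cons, if_pos (hμA s hsA)] at hd
            omega
    -- ================== CASE s ∈ B ==================
    · have hsA : s ∉ A := fun h => absurd (hord s h s hsB) (lt_irrefl s)
      have hsplit : (B.filter (fun t => t < s)).card + (B.filter (fun t => s < t)).card
          = B.card - 1 := card_split hsB
      have hcardB : 1 ≤ B.card := Finset.card_pos.2 ⟨s, hsB⟩
      have hdisj_Alo : Disjoint A (B.filter (fun t => t < s)) :=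
        Finset.disjoint_left.2 fun x hx hx' =>
          Finset.disjoint_left.1 hdisjAB hx (Finset.mem_filter.1 hx').1
      have hU : (A ∪ B.filter (fun t => t < s)) ∪ B.filter (fun t => s < t)
          = (A ∪ B).erase s := by
        ext x
        simp only [Finset.mem_union, Finset.mem_erase, Finset.mem_filter]
        constructor
        · rintro ((hxA | ⟨hxB, h⟩) | ⟨hxB, h⟩)
          · exact ⟨fun hxs => hsA (hxs ▸ hxA), Or.inl hxA⟩
          · exact ⟨by omega, Or.inr hxB⟩
          · exact ⟨by omega, Or.inr hxB⟩
        · rintro ⟨hne, hxA | hxB⟩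
          · exact Or.inl (Or.inl hxA)
          · rcases lt_or_gt_of_ne hne with h | h
            · exact Or.inl (Or.inr ⟨hxB, h⟩)
            · exact Or.inr ⟨hxB, h⟩
      have hμs : μ < (s:ℚ) := hμB s hsB
      by_cases he : 0 < e
      -- ---- case 3a ----
      · have hAdm : AdmissibleA (Dv q e A B) s := (adm_B_iff q e hsB hsA).2 (Or.inl he)
        rw [del_d he hsB hsA]
        have hm' : q + 2 + (e-1)
            = (A ∪ B.filter (fun t => t < s)).card + (B.filter (fun t => s < t)).card := by
          rw [Finset.card_union_of_disjoint hdisj_Alo]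
          omega
        have hord' : ∀ x ∈ A ∪ B.filter (fun t => t < s),
            ∀ y ∈ B.filter (fun t => s < t), x < y := by
          intro x hx y hy
          have hy' := Finset.mem_filter.1 hy
          rcases Finset.mem_union.1 hx with hx | hx
          · exact hord x hx y hy'.1
          · exact lt_trans (Finset.mem_filter.1 hx).2 hy'.2
        have hμA' : ∀ x ∈ A ∪ B.filter (fun t => t < s), (x:ℚ) < (s:ℚ) - 1/2 := by
          intro x hx
          have hxs : x < s := by
            rcases Finset.mem_union.1 hx with hx | hx
            · exact hord x hx s hsB
            · exact (Finset.mem_filter.1 hx).2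
          exact (rat_lt_sub_half_iff hxs.ne).2 hxs
        have hμB' : ∀ y ∈ B.filter (fun t => s < t), (s:ℚ) - 1/2 < (y:ℚ) := by
          intro y hy
          have : (s:ℚ) < (y:ℚ) := by exact_mod_cast (Finset.mem_filter.1 hy).2
          linarith
        rw [ih q (e-1) _ _ ((s:ℚ) - 1/2) hm' hord' hμA' hμB']
        rw [and_iff_right hAdm]
        refine (reduce_rhs hsAB hU ?_ ?_).symm
        · rw [← Finset.card_pos, hU, Finset.card_erase_of_mem hsAB, hcardU]
          omega
        · intro u t hu ht
          have hus : u ≠ s := by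
            rw [hU] at hu
            exact (Finset.mem_erase.1 hu).1
          simp only [List.map_cons]
          rw [listDescents_cons_cons μ, listDescents_cons_cons ((s:ℚ)),
            listDescents_cons_cons ((s:ℚ) - 1/2)]
          rw [if_neg (not_lt.2 hμs.le)]
          have h2 : ((u:ℚ) < (s:ℚ) - 1/2) ↔ ((u:ℚ) < (s:ℚ)) := by
            rw [rat_lt_sub_half_iff hus, Nat.cast_lt]
          by_cases h3 : (u:ℚ) < (s:ℚ)
          · rw [if_pos h3, if_pos (h2.2 h3)]
            omega
          · rw [if_neg h3, if_neg (fun hc => h3 (h2.1 hc))]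
            omega
      -- ---- e = 0 ----
      · have he0 : e = 0 := by omega
        subst he0
        by_cases hmax : ∀ t ∈ B, t ≤ s
        · have hAdm : AdmissibleA (Dv q 0 A B) s := (adm_B_iff q 0 hsB hsA).2 (Or.inr hmax)
          rw [del_c hsB hsA]
          have hhie : B.filter (fun t => s < t) = ∅ :=
            Finset.filter_false_of_mem (fun t ht => not_lt.2 (hmax t ht))
          have hhic : (B.filter (fun t => s < t)).card = 0 := by
            rw [hhie]; rfl
          have hU0 : A ∪ B.filter (fun t => t < s) = (A ∪ B).erase s := by
            rw [← hU, hhie, Finset.union_empty]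
          have hlt : ∀ u ∈ (A ∪ B).erase s, u < s := by
            intro u hu
            have h1 := (Finset.mem_erase.1 hu).1
            rcases Finset.mem_union.1 (Finset.mem_of_mem_erase hu) with h | h
            · exact hord u h s hsB
            · exact lt_of_le_of_ne (hmax u h) h1
          by_cases hq : 0 < q
          · -- case 3b
            rw [rep_append_eq_Dv q hq _]
            have hm' : (q-1) + 2 + 0
                = (∅:Finset ℕ).card + (A ∪ B.filter (fun t => t < s)).card := by
              rw [Finset.card_empty, Finset.card_union_of_disjoint hdisj_Alo]
              omega
            have hord' : ∀ x ∈ (∅:Finset ℕ),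
                ∀ y ∈ A ∪ B.filter (fun t => t < s), x < y := by simp
            have hμA' : ∀ x ∈ (∅:Finset ℕ), (x:ℚ) < (-1:ℚ) := by simp
            have hμB' : ∀ y ∈ A ∪ B.filter (fun t => t < s), (-1:ℚ) < (y:ℚ) := by
              intro y hy
              have : (0:ℚ) ≤ (y:ℚ) := Nat.cast_nonneg y
              linarith
            rw [ih (q-1) 0 _ _ (-1:ℚ) hm' hord' hμA' hμB']
            rw [and_iff_right hAdm]
            refine (reduce_rhs hsAB (by rw [Finset.empty_union]; exact hU0) ?_ ?_).symm
            · rw [Finset.empty_union, ← Finset.card_pos, hU0,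
                Finset.card_erase_of_mem hsAB, hcardU]
              omega
            · intro u t hu ht
              rw [Finset.empty_union] at hu
              have hus : u < s := hlt u (hU0 ▸ hu)
              have hus' : (u:ℚ) < (s:ℚ) := by exact_mod_cast hus
              have hu0 : (0:ℚ) ≤ (u:ℚ) := Nat.cast_nonneg u
              simp only [List.map_cons]
              rw [listDescents_cons_cons μ, listDescents_cons_cons ((s:ℚ)),
                listDescents_cons_cons (-1:ℚ)]
              rw [if_neg (not_lt.2 hμs.le), if_pos hus', if_neg (by linarith)]
              omega
          · -- case 3c : q = 0, e = 0
            have hq0 : q = 0 := by omega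
            subst hq0
            have hcard1 : (A ∪ B.filter (fun t => t < s)).card = 1 := by
              rw [hU0, Finset.card_erase_of_mem hsAB, hcardU]
              omega
            obtain ⟨t, ht⟩ := Finset.card_eq_one.1 hcard1
            have htmem : t ∈ (A ∪ B).erase s := by rw [← hU0, ht]; simp
            have hts : t ≠ s := (Finset.mem_erase.1 htmem).1
            have hst : t < s := hlt t htmem
            have hst' : (t:ℚ) < (s:ℚ) := by exact_mod_cast hst
            simp only [List.replicate_zero, List.nil_append]
            rw [ht, isCPermA_singleton]
            rw [and_iff_right hAdm]
            constructor
            · rintro rfl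
              refine ⟨by simp [Ne.symm hts], ?_, ?_⟩
              · intro x
                have hAB : A ∪ B = insert s {t} := by
                  rw [← Finset.insert_erase hsAB, ← hU0, ht]
                rw [hAB]
                simp
              · simp only [List.map_cons, List.map_nil]
                rw [listDescents_cons_cons, listDescents_cons_cons, listDescents_single]
                rw [if_neg (not_lt.2 hμs.le), if_pos hst']
            · rintro ⟨hnd, hc, -⟩
              have hsw : s ∉ w := (List.nodup_cons.1 hnd).1
              apply eq_single_of_nodup (List.nodup_cons.1 hnd).2
              intro x
              constructor
              · intro hx
                have hxU : x ∈ A ∪ B := (hc x).1 (by simp [hx])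
                have hxs : x ≠ s := fun h => hsw (h ▸ hx)
                have hx2 : x ∈ (A ∪ B).erase s := Finset.mem_erase.2 ⟨hxs, hxU⟩
                rw [← hU0, ht] at hx2
                simpa using hx2
              · intro hxt
                have h1 : t ∈ s :: w := (hc t).2 (Finset.mem_of_mem_erase htmem)
                rcases List.mem_cons.1 h1 with h | h
                · exact absurd h hts
                · rw [hxt]; exact h
        · -- case 3d : e = 0, s not maximal: both sides false
          push_neg at hmax
          obtain ⟨t, htB, hts⟩ := hmax
          constructor
          · rintro ⟨hadm, -⟩
            rcases (adm_B_iff q 0 hsB hsA).1 hadm with h | h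
            · omega
            · exact absurd (h t htB) (not_le.2 hts)
          · rintro ⟨hnd, hc, hd⟩
            exfalso
            have hts2 : s < t := hts
            have htw : t ∈ w := by
              have h1 := (hc t).2 (Finset.mem_union_right _ htB)
              rcases List.mem_cons.1 h1 with rfl | h
              · omega
              · exact h
            have hlen : (s :: w).length = (A ∪ B).card :=
              nodup_content_length hnd hc
            have hwlen : w.length = q + 1 := by
              simp only [List.length_cons] at hlen
              rw [hcardU] at hlen
              omega
            have hts' : (s:ℚ) < (t:ℚ) := by exact_mod_cast hts2
            have htm : (t:ℚ) ∈ List.map (fun z : ℕ => (z:ℚ)) w := List.mem_map.2 ⟨t, htw, rfl⟩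
            have h1 : listDescents ((s:ℚ) :: List.map (fun z : ℕ => (z:ℚ)) w)
                ≤ (List.map (fun z : ℕ => (z:ℚ)) w).length - 1 :=
              listDescents_lt_of_head_lt htm hts'
            rw [List.length_map, hwlen] at h1
            simp only [List.map_cons] at hd
            rw [listDescents_cons_cons, if_neg (not_lt.2 hμs.le)] at hd
            omega


lemma shift_lt_iff (r : ℕ) : ∀ x y : ℕ,
    (if x ≤ r then x else x + 1) < (if y ≤ r then y else y + 1) ↔ x < y := by
  intro x y
  split_ifs <;> omega

lemma shift_inj (r : ℕ) : Function.Injective (fun x : ℕ => if x ≤ r then x else x + 1) := by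
  intro x y h
  dsimp at h
  split_ifs at h <;> omega

lemma des_shift (r : ℕ) (l : List ℕ) :
    listDescents ((r+1) :: List.map (fun x => if x ≤ r then x else x + 1) l)
      = listDescents (((r:ℚ) + 1/2) :: List.map (fun z : ℕ => (z:ℚ)) l) := by
  have hcast : ∀ x y : ℕ, (x:ℚ) < (y:ℚ) ↔ x < y := fun x y => Nat.cast_lt
  cases l with
  | nil => rfl
  | cons a t =>
    simp only [List.map_cons]
    rw [listDescents_cons_cons, listDescents_cons_cons]
    have e1 : listDescents ((if a ≤ r then a else a + 1) ::
        List.map (fun x => if x ≤ r then x else x + 1) t) = listDescents (a :: t) := by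
      have efold : ((if a ≤ r then a else a + 1) ::
          List.map (fun x => if x ≤ r then x else x + 1) t)
          = List.map (fun x => if x ≤ r then x else x + 1) (a :: t) := rfl
      rw [efold]
      exact listDescents_map (shift_lt_iff r) _
    have e2 : listDescents ((a:ℚ) :: List.map (fun z : ℕ => (z:ℚ)) t)
        = listDescents (a :: t) := by
      have efold : ((a:ℚ) :: List.map (fun z : ℕ => (z:ℚ)) t)
          = List.map (fun z : ℕ => (z:ℚ)) (a :: t) := rfl
      rw [efold]
      exact listDescents_map hcast _
    rw [e1, e2]
    congr 1
    by_cases h : a ≤ r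
    · rw [if_pos h, if_pos (by omega : a < r + 1), if_pos]
      have : (a:ℚ) ≤ (r:ℚ) := by exact_mod_cast h
      linarith
    · rw [if_neg h, if_neg (by omega : ¬ (a + 1 < r + 1)), if_neg]
      have : (r:ℚ) + 1 ≤ (a:ℚ) := by exact_mod_cast (by omega : r + 1 ≤ a)
      exact not_lt.2 (by linarith)

lemma range_split1 {n r : ℕ} (hr : r ≤ n) :
    List.range' 1 n = List.range' 1 r ++ List.range' (1+r) (n-r) := by
  have h := List.range'_append (s := 1) (m := r) (n := n-r) (step := 1)
  have e1 : 1 + 1 * r = 1 + r := by omega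
  have e2 : r + (n - r) = n := by omega
  rw [e1, e2] at h
  exact h.symm

lemma range_split2 {n r : ℕ} (hr : r ≤ n) :
    List.range' 1 (n+1) = List.range' 1 r ++ ((r+1) :: List.range' (2+r) (n-r)) := by
  have h := List.range'_append (s := 1) (m := r) (n := n+1-r) (step := 1)
  have e1 : 1 + 1 * r = 1 + r := by omega
  have e2 : r + (n + 1 - r) = n + 1 := by omega
  rw [e1, e2] at h
  rw [← h]
  congr 1
  have e3 : n + 1 - r = (n - r) + 1 := by omega
  rw [e3, List.range'_succ, show 1 + r + 1 = 2 + r from by omega,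
    show 1 + r = r + 1 from by omega]

lemma map_shift_range {n r : ℕ} (hr : r ≤ n) :
    List.map (fun x => if x ≤ r then x else x + 1) (List.range' 1 n)
      = List.range' 1 r ++ List.range' (2+r) (n-r) := by
  rw [range_split1 hr, List.map_append]
  congr 1
  · have h1 : ∀ a ∈ List.range' 1 r, (if a ≤ r then a else a + 1) = id a := by
      intro a ha
      have := List.mem_range'_1.1 ha
      rw [if_pos (by omega)]
      rfl
    rw [List.map_congr_left h1, List.map_id]
  · have h1 : ∀ a ∈ List.range' (1+r) (n-r),
        (if a ≤ r then a else a + 1) = 1 + a := by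
      intro a ha
      have := List.mem_range'_1.1 ha
      rw [if_neg (by omega)]
      omega
    rw [List.map_congr_left h1, List.map_add_range']
    congr 1
    omega

lemma shift_perm {n r : ℕ} (hr : r ≤ n) {l : List ℕ} (hl : l.Perm (List.range' 1 n)) :
    ((r+1) :: List.map (fun x => if x ≤ r then x else x + 1) l).Perm
      (List.range' 1 (n+1)) := by
  refine List.Perm.trans (List.Perm.cons _ (hl.map _)) ?_
  rw [map_shift_range hr]
  refine List.Perm.trans List.perm_middle.symm ?_
  exact List.Perm.of_eq (range_split2 hr).symm


/-- for `|C| = (0^{k-2}, r, n-r, 0^{n-k})`, a permutation `w` of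
`{1,…,n}` is a `C`-permutation iff the sequence `r + 1/2, w₁, …, w_n` has exactly
`k-1` descents; hence the count is the number of `v ∈ S_{n+1}` with `k-1` descents
and `v(1) = r+1`. -/
theorem cperm_adjacent (n k r : ℕ) (h1 : 2 ≤ k) (h2 : k ≤ n) (h3 : r ≤ n) :
    (∀ w : List ℕ, w.Perm (List.range' 1 n) →
      (IsCPermA (List.replicate (k - 2) ∅ ++ [Finset.Icc 1 r, Finset.Icc (r + 1) n] ++
          List.replicate (n - k) ∅) w ↔
        listDescents (((r : ℚ) + 1/2) :: w.map (fun s => (s : ℚ))) = k - 1)) ∧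
    Nat.card {w : List ℕ //
        IsCPermA (List.replicate (k - 2) ∅ ++ [Finset.Icc 1 r, Finset.Icc (r + 1) n] ++
          List.replicate (n - k) ∅) w} =
      (List.range' 1 (n + 1)).permutations.countP
        (fun l => decide (listDescents l = k - 1 ∧ l.headI = r + 1)) := by
  have hC : (List.replicate (k - 2) (∅:Finset ℕ) ++ [Finset.Icc 1 r, Finset.Icc (r + 1) n] ++
      List.replicate (n - k) ∅) = Dv (k-2) (n-k) (Finset.Icc 1 r) (Finset.Icc (r+1) n) := by
    rw [Dv]
    simp
  have hm : (k-2) + 2 + (n-k) = (Finset.Icc 1 r).card + (Finset.Icc (r+1) n).card := by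
    rw [Nat.card_Icc, Nat.card_Icc]
    omega
  have hord : ∀ x ∈ Finset.Icc 1 r, ∀ y ∈ Finset.Icc (r+1) n, x < y := by
    intro x hx y hy
    rw [Finset.mem_Icc] at hx hy
    omega
  have hμA : ∀ x ∈ Finset.Icc 1 r, (x:ℚ) < (r:ℚ) + 1/2 := by
    intro x hx
    rw [Finset.mem_Icc] at hx
    have : (x:ℚ) ≤ (r:ℚ) := by exact_mod_cast hx.2
    linarith
  have hμB : ∀ y ∈ Finset.Icc (r+1) n, (r:ℚ) + 1/2 < (y:ℚ) := by
    intro y hy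
    rw [Finset.mem_Icc] at hy
    have : (r:ℚ) + 1 ≤ (y:ℚ) := by exact_mod_cast hy.1
    linarith
  have hk1 : (k-2) + 1 = k - 1 := by omega
  have hcont : ∀ x : ℕ, x ∈ List.range' 1 n ↔ x ∈ Finset.Icc 1 r ∪ Finset.Icc (r+1) n := by
    intro x
    rw [List.mem_range'_1, Finset.mem_union, Finset.mem_Icc, Finset.mem_Icc]
    omega
  have key : ∀ w : List ℕ,
      IsCPermA (List.replicate (k - 2) ∅ ++ [Finset.Icc 1 r, Finset.Icc (r + 1) n] ++
        List.replicate (n - k) ∅) w ↔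
      (w.Perm (List.range' 1 n) ∧
        listDescents (((r:ℚ) + 1/2) :: List.map (fun z : ℕ => (z:ℚ)) w) = k - 1) := by
    intro w
    rw [hC, mainD w (k-2) (n-k) (Finset.Icc 1 r) (Finset.Icc (r+1) n) ((r:ℚ)+1/2)
      hm hord hμA hμB]
    constructor
    · rintro ⟨hnd, hcw, hd⟩
      refine ⟨(List.perm_ext_iff_of_nodup hnd (List.nodup_range' (s := 1) (n := n))).2
        (fun a => (hcw a).trans ((hcont a).symm)), ?_⟩
      rw [← hk1]
      exact hd
    · rintro ⟨hp, hd⟩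
      have hnd : w.Nodup := hp.nodup_iff.2 (List.nodup_range' (s := 1) (n := n))
      exact ⟨hnd, fun x => (hp.mem_iff).trans (hcont x), by rw [hk1]; exact hd⟩
  constructor
  · intro w hperm
    rw [coe_norm w, key w]
    exact and_iff_right hperm
  · have hndF₁ : ((List.range' 1 n).permutations.filter (fun l =>
        decide (listDescents (((r:ℚ) + 1/2) :: List.map (fun z : ℕ => (z:ℚ)) l) = k - 1))).Nodup :=
      (List.nodup_permutations _ (List.nodup_range' (s := 1) (n := n))).filter _
    have hndF₂ : ((List.range' 1 (n+1)).permutations.filter (fun l =>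
        decide (listDescents l = k - 1 ∧ l.headI = r + 1))).Nodup :=
      (List.nodup_permutations _ (List.nodup_range' (s := 1) (n := n+1))).filter _
    have hstep1 : Nat.card {w : List ℕ //
        IsCPermA (List.replicate (k - 2) ∅ ++ [Finset.Icc 1 r, Finset.Icc (r + 1) n] ++
          List.replicate (n - k) ∅) w}
        = ((List.range' 1 n).permutations.filter (fun l =>
            decide (listDescents (((r:ℚ) + 1/2) :: List.map (fun z : ℕ => (z:ℚ)) l) = k - 1))).length := by
      have e : {w : List ℕ //
          IsCPermA (List.replicate (k - 2) ∅ ++ [Finset.Icc 1 r, Finset.Icc (r + 1) n] ++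
            List.replicate (n - k) ∅) w}
          ≃ {w : List ℕ // w ∈ ((List.range' 1 n).permutations.filter (fun l =>
            decide (listDescents (((r:ℚ) + 1/2) :: List.map (fun z : ℕ => (z:ℚ)) l) = k - 1))).toFinset} := by
        refine Equiv.subtypeEquivRight (fun w => ?_)
        rw [key w, List.mem_toFinset, List.mem_filter, List.mem_permutations,
          decide_eq_true_eq]
      rw [Nat.card_congr e, Nat.card_eq_finsetCard, List.toFinset_card_of_nodup hndF₁]
    rw [hstep1, List.countP_eq_length_filter,
      ← List.toFinset_card_of_nodup hndF₁, ← List.toFinset_card_of_nodup hndF₂]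
    refine Finset.card_bij
      (fun l _ => (r+1) :: List.map (fun x => if x ≤ r then x else x + 1) l) ?_ ?_ ?_
    · -- maps into target
      intro l hl
      rw [List.mem_toFinset, List.mem_filter, List.mem_permutations, decide_eq_true_eq] at hl
      obtain ⟨hlperm, hlp⟩ := hl
      rw [List.mem_toFinset, List.mem_filter, List.mem_permutations, decide_eq_true_eq]
      refine ⟨shift_perm h3 hlperm, ?_, rfl⟩
      rw [des_shift r l]
      exact hlp
    · -- injective
      intro l₁ h₁ l₂ h₂ heq
      injection heq with h1 h2
      exact List.map_injective_iff.2 (shift_inj r) h2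
    · -- surjective
      intro v hv
      rw [List.mem_toFinset, List.mem_filter, List.mem_permutations, decide_eq_true_eq] at hv
      obtain ⟨hvp, hvdes, hvhead⟩ := hv
      obtain ⟨a, t, rfl⟩ : ∃ a t, v = a :: t := by
        cases v with
        | nil =>
          exfalso
          have := hvp.length_eq
          simp at this
        | cons a t => exact ⟨a, t, rfl⟩
      have ha : a = r + 1 := by simpa using hvhead
      subst ha
      have hvnd : ((r+1) :: t).Nodup := hvp.nodup_iff.2 (List.nodup_range' (s := 1) (n := n+1))
      have hrt : (r+1) ∉ t := (List.nodup_cons.1 hvnd).1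
      have htperm : t.Perm (List.range' 1 r ++ List.range' (2+r) (n-r)) := by
        have h5 := hvp.trans (List.Perm.of_eq (range_split2 h3))
        exact (List.perm_cons _).1 (h5.trans List.perm_middle)
      have htmem : ∀ x ∈ t, 1 ≤ x ∧ x ≠ r + 1 := by
        intro x hx
        have h6 : x ∈ List.range' 1 (n+1) := hvp.mem_iff.1 (List.mem_cons_of_mem _ hx)
        have h7 := List.mem_range'_1.1 h6
        exact ⟨h7.1, fun hc => hrt (hc ▸ hx)⟩
      refine ⟨List.map (fun x => if x ≤ r then x else x - 1) t, ?_, ?_⟩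
      · -- in source
        rw [List.mem_toFinset, List.mem_filter, List.mem_permutations, decide_eq_true_eq]
        have hshun : List.map (fun x => if x ≤ r then x else x + 1)
            (List.map (fun x => if x ≤ r then x else x - 1) t) = t := by
          rw [List.map_map]
          have hpt : ∀ x ∈ t, ((fun x => if x ≤ r then x else x + 1) ∘
              (fun x => if x ≤ r then x else x - 1)) x = id x := by
            intro x hx
            have := htmem x hx
            simp only [Function.comp_apply, id_eq]
            split_ifs <;> omega
          rw [List.map_congr_left hpt, List.map_id]
        have hlperm : (List.map (fun x => if x ≤ r then x else x - 1) t).Perm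
            (List.range' 1 n) := by
          refine (htperm.map _).trans ?_
          rw [List.map_append]
          have e1 : List.map (fun x => if x ≤ r then x else x - 1) (List.range' 1 r)
              = List.range' 1 r := by
            have h1 : ∀ a ∈ List.range' 1 r, (if a ≤ r then a else a - 1) = id a := by
              intro a ha
              have := List.mem_range'_1.1 ha
              rw [if_pos (by omega)]
              rfl
            rw [List.map_congr_left h1, List.map_id]
          have e2 : List.map (fun x => if x ≤ r then x else x - 1) (List.range' (2+r) (n-r))
              = List.range' (1+r) (n-r) := by
            have hrs : List.range' (2+r) (n-r)
                = List.map (fun x => 1 + x) (List.range' (1+r) (n-r)) := by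
              rw [List.map_add_range']
              congr 1
              omega
            rw [hrs, List.map_map]
            have h1 : ∀ a ∈ List.range' (1+r) (n-r),
                ((fun x => if x ≤ r then x else x - 1) ∘ (fun x => 1 + x)) a = id a := by
              intro a ha
              have := List.mem_range'_1.1 ha
              simp only [Function.comp_apply, id_eq]
              rw [if_neg (by omega)]
              omega
            rw [List.map_congr_left h1, List.map_id]
          rw [e1, e2]
          exact List.Perm.of_eq (range_split1 h3).symm
        refine ⟨hlperm, ?_⟩
        rw [← des_shift r, hshun]
        exact hvdes
      · -- maps to v
        show ((r+1) :: List.map (fun x => if x ≤ r then x else x + 1)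
          (List.map (fun x => if x ≤ r then x else x - 1) t)) = (r+1) :: t
        rw [List.map_map]
        have hpt : ∀ x ∈ t, ((fun x => if x ≤ r then x else x + 1) ∘
            (fun x => if x ≤ r then x else x - 1)) x = id x := by
          intro x hx
          have := htmem x hx
          simp only [Function.comp_apply, id_eq]
          split_ifs <;> omega
        rw [List.map_congr_left hpt, List.map_id]


end MixedEulerian
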